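/- For every h₀ > 0, every λ > 0 and all h, H ≥ h₀, one has |√λ·(cosh(√λ·h)/sinh(√λ·h)) − √λ·(cosh(√λ·H)/sinh(√λ·H))| ≤ |h − H| / h₀². -/

import Mathlib

theorem stmt_6 (h₀ : ℝ) (hh₀ : 0 < h₀) (lam : ℝ) (hlam : 0 < lam)
    (h H : ℝ) (hh : h₀ ≤ h) (hH : h₀ ≤ H) :
    |Real.sqrt lam *
        (Real.cosh (Real.sqrt lam * h) / Real.sinh (Real.sqrt lam * h)) -
      Real.sqrt lam *
        (Real.cosh (Real.sqrt lam * H) / Real.sinh (Real.sqrt lam * H))| ≤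
      |h - H| / h₀ ^ 2 := by
  set s := Real.sqrt lam with hsdef
  have hspos : 0 < s := Real.sqrt_pos.mpr hlam
  have hs2 : s ^ 2 = lam := Real.sq_sqrt hlam.le
  set f : ℝ → ℝ := fun x => s * (Real.cosh (s * x) / Real.sinh (s * x)) with hf
  set f' : ℝ → ℝ := fun x => -(lam / Real.sinh (s * x) ^ 2) with hf'
  have key : ∀ x ∈ Set.Ici h₀, HasDerivWithinAt f (f' x) (Set.Ici h₀) x := by
    intro x hx
    have hx0 : 0 < s * x := mul_pos hspos (hh₀.trans_le hx)
    have hsinhpos : 0 < Real.sinh (s * x) := Real.sinh_pos_iff.mpr hx0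
    have hsinh : Real.sinh (s * x) ≠ 0 := hsinhpos.ne'
    have h1 : HasDerivAt (fun y => Real.cosh (s * y)) (Real.sinh (s * x) * s) x := by
      simpa [Function.comp_def] using (Real.hasDerivAt_cosh (s * x)).comp x ((hasDerivAt_id x).const_mul s)
    have h2 : HasDerivAt (fun y => Real.sinh (s * y)) (Real.cosh (s * x) * s) x := by
      simpa [Function.comp_def] using (Real.hasDerivAt_sinh (s * x)).comp x ((hasDerivAt_id x).const_mul s)
    have h3 := (h1.div h2 hsinh).const_mul s
    have heq : s * ((Real.sinh (s * x) * s * Real.sinh (s * x) -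
        Real.cosh (s * x) * (Real.cosh (s * x) * s)) / Real.sinh (s * x) ^ 2) = f' x := by
      have hc := Real.cosh_sq_sub_sinh_sq (s * x)
      rw [hf']
      field_simp
      nlinarith [hs2, hc]
    rw [heq] at h3
    exact h3.hasDerivWithinAt
  have bound : ∀ x ∈ Set.Ici h₀, ‖f' x‖ ≤ 1 / h₀ ^ 2 := by
    intro x hx
    have hxpos : 0 < x := hh₀.trans_le hx
    have hx0 : 0 < s * x := mul_pos hspos hxpos
    have hsinhpos : 0 < Real.sinh (s * x) := Real.sinh_pos_iff.mpr hx0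
    have hge : s * h₀ ≤ Real.sinh (s * x) := by
      calc s * h₀ ≤ s * x := mul_le_mul_of_nonneg_left (Set.mem_Ici.mp hx) hspos.le
        _ ≤ Real.sinh (s * x) := (Real.self_lt_sinh_iff.mpr hx0).le
    have hsq : lam * h₀ ^ 2 ≤ Real.sinh (s * x) ^ 2 := by nlinarith [hs2, hge, mul_nonneg hspos.le hh₀.le]
    have : ‖f' x‖ = lam / Real.sinh (s * x) ^ 2 := by
      rw [hf']
      rw [Real.norm_eq_abs, abs_neg, abs_of_nonneg (by positivity)]
    rw [this, div_le_div_iff₀ (by positivity) (by positivity)]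
    nlinarith
  have := (convex_Ici h₀).norm_image_sub_le_of_norm_hasDerivWithin_le key bound hH hh
  calc |f h - f H| = ‖f h - f H‖ := rfl
    _ ≤ 1 / h₀ ^ 2 * ‖h - H‖ := this
    _ = |h - H| / h₀ ^ 2 := by rw [Real.norm_eq_abs]; ring
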